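/- Let n ≥ 2 and p ≥ 0 an integer. There is a constant C(n,p) such that for all u ∈ l²(ℤⁿ): ‖u‖_{l^{4p+4}} ≤ ‖u‖_{l^{2n(p+1)/(n−1)}} ≤ C(n,p)·|u|_{1,2}^{1/(2p+2)}·‖u‖_{l^{4p+2}}^{(2p+1)/(2p+2)}. -/

import Mathlib

open Finset

noncomputable section

/-- Vertices of the lattice graph `ℤⁿ`. -/
abbrev LV (n : ℕ) := Fin n → ℤ

/-- The set of neighbors of a vertex `x` in the lattice graph `ℤⁿ`
(the points differing from `x` by `±1` in exactly one coordinate). -/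
def latNbrs {n : ℕ} (x : LV n) : Finset (LV n) :=
  Finset.image (fun p : Fin n × Bool =>
    Function.update x p.1 (x p.1 + (if p.2 then 1 else -1))) Finset.univ

/-- The graph Laplacian on `ℤⁿ`: `Δu(x) = Σ_{y∼x} (u(y) - u(x))`. -/
def latLap {n : ℕ} (u : LV n → ℝ) (x : LV n) : ℝ :=
  ∑ y ∈ latNbrs x, (u y - u x)

/-- The boundary `∂Ω = {y ∉ Ω : ∃ x ∈ Ω, y ∼ x}` of a finite set `Ω ⊂ ℤⁿ`. -/
def latBdry {n : ℕ} (Ω : Finset (LV n)) : Finset (LV n) :=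
  Ω.biUnion latNbrs \ Ω

/-- The closure `Ω̄ = Ω ∪ ∂Ω`. -/
def latClosure {n : ℕ} (Ω : Finset (LV n)) : Finset (LV n) :=
  Ω ∪ latBdry Ω

/-- The bilinear Dirichlet form
`E_Ω(u,v) = (1/2) Σ_{x,y ∈ Ω̄, x∼y} (u(y)-u(x))(v(y)-v(x))`. -/
def latEnergy {n : ℕ} (Ω : Finset (LV n)) (u v : LV n → ℝ) : ℝ :=
  (1 / 2) * ∑ x ∈ latClosure Ω, ∑ y ∈ latNbrs x ∩ latClosure Ω,
    (u y - u x) * (v y - v x)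

/-- The source term `h = 4π Σ_{j=1}^M n_j δ_{p_j}`. -/
def chernH {n M : ℕ} (nj : Fin M → ℕ) (pts : Fin M → LV n) (x : LV n) : ℝ :=
  4 * Real.pi * ∑ j, (nj j : ℝ) * (if x = pts j then 1 else 0)

/-- The `l^r` norm `(Σ_{x∈ℤⁿ} |u(x)|^r)^{1/r}` with respect to counting measure. -/
def lnorm {n : ℕ} (u : LV n → ℝ) (r : ℝ) : ℝ :=
  (∑' x : LV n, |u x| ^ r) ^ (1 / r)

/-- The discrete `W^{1,q}` gradient seminorm
`|u|_{1,q} = (Σ_{x∈ℤⁿ} Σ_{y∼x} |u(y)-u(x)|^q)^{1/q}`. -/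
def semiNorm1 {n : ℕ} (u : LV n → ℝ) (q : ℝ) : ℝ :=
  (∑' x : LV n, ∑ y ∈ latNbrs x, |u y - u x| ^ q) ^ (1 / q)

namespace GNSaux

variable {n : ℕ}

/-- The shift vector associated to a direction/sign pair. -/
def sh (q : Fin n × Bool) : LV n := fun j => if j = q.1 then (if q.2 then 1 else -1) else 0

lemma nbr_eq_add (x : LV n) (q : Fin n × Bool) :
    Function.update x q.1 (x q.1 + (if q.2 then 1 else -1)) = x + sh q := by
  funext j
  by_cases h : j = q.1 <;> simp [Function.update_apply, sh, h, Pi.add_apply]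

lemma nbr_inj' (x : LV n) {q q' : Fin n × Bool}
    (h : x + sh q = x + sh q') : q = q' := by
  have h' : sh q = sh q' := add_left_cancel h
  rcases q with ⟨i, b⟩; rcases q' with ⟨j, c⟩
  have hij : i = j := by
    by_contra hij
    have h2 := congrFun h' i
    simp [sh, hij] at h2
    rcases b with _ | _ <;> simp_all
  subst hij
  simp only [Prod.mk.injEq, true_and]
  have h2 := congrFun h' i
  simp [sh] at h2
  rcases b with _ | _ <;> rcases c with _ | _ <;> simp_all <;> omega

lemma sum_latNbrs {M : Type*} [AddCommMonoid M] (x : LV n) (h : LV n → M) :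
    ∑ y ∈ latNbrs x, h y = ∑ q : Fin n × Bool, h (x + sh q) := by
  rw [latNbrs, Finset.sum_image (fun q _ q' _ hq => by
    refine nbr_inj' x ?_
    rw [← nbr_eq_add, ← nbr_eq_add]; exact hq)]
  exact Finset.sum_congr rfl fun q _ => by rw [nbr_eq_add]

lemma mem_latNbrs_add (x : LV n) (q : Fin n × Bool) : x + sh q ∈ latNbrs x := by
  rw [latNbrs, Finset.mem_image]
  exact ⟨q, Finset.mem_univ q, nbr_eq_add x q⟩

lemma summable_shift {f : LV n → ℝ} (hf : Summable f) (v : LV n) :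
    Summable (fun x => f (x + v)) :=
  ((Equiv.addRight v).summable_iff (f := f)).2 hf

lemma tsum_shift_ennreal (f : LV n → ENNReal) (v : LV n) :
    ∑' x : LV n, f (x + v) = ∑' x : LV n, f x :=
  (Equiv.addRight v).tsum_eq f

end GNSaux

open MeasureTheory in
instance : SigmaFinite (Measure.count : Measure ℤ) := by
  classical
  let e : ℕ ≃ ℤ := (Denumerable.eqv ℤ).symm
  constructor
  exact ⟨⟨fun k => {e k}, fun _ => trivial,
    fun k => by simp [Measure.count_singleton], by
      rw [Set.eq_univ_iff_forall]; intro x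
      exact Set.mem_iUnion.2 ⟨e.symm x, by simp⟩⟩⟩

open MeasureTheory in
lemma pi_count_eq {n : ℕ} :
    (Measure.pi (fun _ : Fin n => Measure.count) : Measure (LV n)) = Measure.count := by
  refine MeasureTheory.Measure.ext_of_singleton (fun x => ?_)
  rw [Measure.count_singleton, ← Set.univ_pi_singleton, Measure.pi_pi]
  simp [Measure.count_singleton]

namespace GNSaux

lemma summable_rpow_of_two_le {α : Type*} {u : α → ℝ} (hu : Summable (fun x => (u x) ^ 2))
    {a : ℝ} (ha : 2 ≤ a) : Summable (fun x => |u x| ^ a) := by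
  set S := ∑' x, (u x) ^ 2 with hS
  have hK : ∀ x, |u x| ≤ Real.sqrt S + 1 := by
    intro x
    have h1 : (u x) ^ 2 ≤ S := Summable.le_tsum hu x (fun y _ => sq_nonneg _)
    have h2 := Real.sqrt_le_sqrt h1
    rw [Real.sqrt_sq_eq_abs] at h2
    linarith
  refine Summable.of_nonneg_of_le (fun x => Real.rpow_nonneg (abs_nonneg _) _)
    (fun x => ?_) (hu.mul_left ((Real.sqrt S + 1) ^ (a - 2)))
  rcases eq_or_ne (u x) 0 with h | h
  · rw [h]
    simp only [abs_zero]
    rw [Real.zero_rpow (by linarith)]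
    have hKx : (0:ℝ) ≤ Real.sqrt S + 1 := by positivity
    positivity
  · have habs : 0 < |u x| := abs_pos.2 h
    have he : |u x| ^ a = |u x| ^ (a - 2) * |u x| ^ (2 : ℝ) := by
      rw [← Real.rpow_add habs]; ring_nf
    rw [he]
    have h2 : |u x| ^ (2:ℝ) = (u x) ^ 2 := by
      rw [show (2:ℝ) = ((2:ℕ):ℝ) by norm_num, Real.rpow_natCast, sq_abs]
    rw [h2]
    have := Real.rpow_le_rpow (abs_nonneg (u x)) (hK x) (by linarith : (0:ℝ) ≤ a - 2)
    exact mul_le_mul_of_nonneg_right this (sq_nonneg _)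

lemma tsum_rpow_le {α : Type*} {f : α → ℝ} (hf0 : ∀ x, 0 ≤ f x) (hf : Summable f)
    {m : ℝ} (hm : 1 ≤ m) :
    Summable (fun x => f x ^ m) ∧ ∑' x, f x ^ m ≤ (∑' x, f x) ^ m := by
  set S := ∑' x, f x with hS
  have hS0 : 0 ≤ S := tsum_nonneg hf0
  have hfle : ∀ x, f x ≤ S := fun x => Summable.le_tsum hf x (fun y _ => hf0 y)
  have key : ∀ x, f x ^ m ≤ S ^ (m - 1) * f x := by
    intro x
    rcases eq_or_lt_of_le (hf0 x) with h | h
    · rw [← h, Real.zero_rpow (by linarith : m ≠ 0), mul_zero]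
    · have he : f x ^ m = f x ^ (m - 1) * f x := by
        rw [← Real.rpow_add_one (ne_of_gt h)]; ring_nf
      rw [he]
      exact mul_le_mul_of_nonneg_right
        (Real.rpow_le_rpow (le_of_lt h) (hfle x) (by linarith)) (le_of_lt h)
  have hsum : Summable (fun x => f x ^ m) :=
    Summable.of_nonneg_of_le (fun x => Real.rpow_nonneg (hf0 x) _) key (hf.mul_left _)
  refine ⟨hsum, ?_⟩
  calc ∑' x, f x ^ m ≤ ∑' x, S ^ (m - 1) * f x := Summable.tsum_le_tsum key hsum (hf.mul_left _)
    _ = S ^ (m - 1) * S := by rw [tsum_mul_left]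
    _ = S ^ m := by
        rcases eq_or_lt_of_le hS0 with h | h
        · rw [← h, Real.zero_rpow (by linarith : m ≠ 0), mul_zero]
        · rw [← Real.rpow_add_one (ne_of_gt h)]; ring_nf

lemma lnorm_mono {n : ℕ} {u : LV n → ℝ} {a b : ℝ} (ha : 0 < a) (hab : a ≤ b)
    (hsum : Summable fun x => |u x| ^ a) : lnorm u b ≤ lnorm u a := by
  have hb : 0 < b := lt_of_lt_of_le ha hab
  have hm : 1 ≤ b / a := (one_le_div ha).2 hab
  obtain ⟨hsb, hle⟩ := tsum_rpow_le (fun x => Real.rpow_nonneg (abs_nonneg _) _) hsum hm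
  have hrw : ∀ x : LV n, (|u x| ^ a) ^ (b / a) = |u x| ^ b := by
    intro x
    rw [← Real.rpow_mul (abs_nonneg _)]
    congr 1
    field_simp
  rw [lnorm, lnorm]
  have h1 : ∑' x, |u x| ^ b ≤ (∑' x, |u x| ^ a) ^ (b / a) := by
    calc ∑' x, |u x| ^ b = ∑' x, (|u x| ^ a) ^ (b / a) := by
          exact tsum_congr fun x => (hrw x).symm
      _ ≤ (∑' x, |u x| ^ a) ^ (b / a) := hle
  calc (∑' x, |u x| ^ b) ^ (1 / b)
      ≤ ((∑' x, |u x| ^ a) ^ (b / a)) ^ (1 / b) := by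
        apply Real.rpow_le_rpow (tsum_nonneg fun x => Real.rpow_nonneg (abs_nonneg _) _) h1
        positivity
    _ = (∑' x, |u x| ^ a) ^ (1 / a) := by
        rw [← Real.rpow_mul (tsum_nonneg fun x => Real.rpow_nonneg (abs_nonneg _) _)]
        congr 1
        field_simp

end GNSaux

namespace GNSaux

open MeasureTheory

variable {n : ℕ}

/-- discrete gradient `ℓ¹`-density -/
def grad (W : LV n → ℝ) (x : LV n) : ℝ := ∑ y ∈ latNbrs x, |W y - W x|

lemma grad_nonneg (W : LV n → ℝ) (x : LV n) : 0 ≤ grad W x :=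
  Finset.sum_nonneg fun y _ => abs_nonneg _

lemma summable_grad {W : LV n → ℝ} (hW : Summable W) (hW0 : ∀ x, 0 ≤ W x) :
    Summable (grad W) := by
  have hbig : Summable (fun x : LV n => ∑ q : Fin n × Bool, (W (x + sh q) + W x)) :=
    summable_sum fun q _ => (summable_shift hW (sh q)).add hW
  refine Summable.of_nonneg_of_le (grad_nonneg W) (fun x => ?_) hbig
  rw [grad, sum_latNbrs]
  refine Finset.sum_le_sum fun q _ => ?_
  calc |W (x + sh q) - W x| ≤ |W (x + sh q)| + |W x| := abs_sub _ _
    _ = W (x + sh q) + W x := by rw [abs_of_nonneg (hW0 _), abs_of_nonneg (hW0 _)]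

lemma le_tsum_line {W : LV n → ℝ} (hW : Summable W) (hW0 : ∀ x, 0 ≤ W x)
    (x : LV n) (i : Fin n) :
    W x ≤ ∑' t : ℤ, grad W (Function.update x i t) := by
  set L : ℤ → LV n := fun t => Function.update x i t with hL
  have hLinj : Function.Injective L := by
    intro s t h
    have := congrFun h i
    simpa [hL, Function.update_self] using this
  have hsumG : Summable (grad W) := summable_grad hW hW0
  have hsumL : Summable (fun t => grad W (L t)) := hsumG.comp_injective hLinj
  have hnbr : ∀ t : ℤ, L (t + 1) = L t + sh (i, true) := by
    intro t
    funext j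
    by_cases h : j = i <;> simp [hL, Function.update_apply, sh, h]
  have step : ∀ t : ℤ, |W (L (t + 1)) - W (L t)| ≤ grad W (L t) := by
    intro t
    have hy : L (t + 1) ∈ latNbrs (L t) := by rw [hnbr]; exact mem_latNbrs_add _ _
    exact Finset.single_le_sum (f := fun y => |W y - W (L t)|)
      (fun y _ => abs_nonneg _) hy
  have hinjN : Function.Injective (fun k : ℕ => x i + (k : ℤ)) := by
    intro a b h; simpa using h
  have hsumN : Summable (fun k : ℕ => grad W (L (x i + k))) :=
    hsumL.comp_injective hinjN
  have key : ∀ T : ℕ, W x ≤ (∑' t : ℤ, grad W (L t)) + W (L (x i + T)) := by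
    intro T
    have tel := Finset.sum_range_sub' (fun k : ℕ => W (L (x i + (k : ℤ)))) T
    simp only [Nat.cast_zero, add_zero] at tel
    have hx0 : L (x i) = x := by simp [hL, Function.update_eq_self]
    rw [hx0] at tel
    have habs : W x - W (L (x i + T)) ≤ ∑ k ∈ Finset.range T, grad W (L (x i + k)) := by
      rw [← tel]
      refine Finset.sum_le_sum fun k _ => ?_
      calc W (L (x i + (k:ℤ))) - W (L (x i + ((k+1 : ℕ) : ℤ)))
          ≤ |W (L (x i + ((k+1 : ℕ) : ℤ))) - W (L (x i + (k:ℤ)))| := by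
            rw [abs_sub_comm]; exact le_abs_self _
        _ ≤ grad W (L (x i + (k:ℤ))) := by
            have hc : (x i + ((k+1 : ℕ) : ℤ)) = (x i + (k:ℤ)) + 1 := by push_cast; ring
            rw [hc]
            exact step _
    have hfin : ∑ k ∈ Finset.range T, grad W (L (x i + k)) ≤ ∑' t : ℤ, grad W (L t) := by
      calc ∑ k ∈ Finset.range T, grad W (L (x i + k))
          ≤ ∑' k : ℕ, grad W (L (x i + k)) :=
            Summable.sum_le_tsum _ (fun k _ => grad_nonneg _ _) hsumN
        _ ≤ ∑' t : ℤ, grad W (L t) :=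
            Summable.tsum_le_tsum_of_inj _ hinjN (fun t _ => grad_nonneg _ _)
              (fun k => le_rfl) hsumN hsumL
    linarith
  have htail : Filter.Tendsto (fun T : ℕ => W (L (x i + T))) Filter.atTop (nhds 0) := by
    have h1 : Filter.Tendsto W Filter.cofinite (nhds 0) := hW.tendsto_cofinite_zero
    have hinj2 : Function.Injective (fun T : ℕ => L (x i + (T : ℤ))) :=
      fun a b h => hinjN (hLinj h)
    have h2 : Filter.Tendsto (fun T : ℕ => L (x i + (T : ℤ))) Filter.cofinite Filter.cofinite :=
      hinj2.tendsto_cofinite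
    rw [← Nat.cofinite_eq_atTop]
    exact h1.comp h2
  have hlim : Filter.Tendsto (fun T : ℕ => (∑' t : ℤ, grad W (L t)) + W (L (x i + T)))
      Filter.atTop (nhds ((∑' t : ℤ, grad W (L t)) + 0)) :=
    tendsto_const_nhds.add htail
  have := ge_of_tendsto hlim (Filter.Eventually.of_forall key)
  simpa using this

end GNSaux

namespace GNSaux

open MeasureTheory

lemma sobolev_one {n : ℕ} (hn : 2 ≤ n) {W : LV n → ℝ} (hW : Summable W)
    (hW0 : ∀ x, 0 ≤ W x) :
    ∑' x : LV n, ENNReal.ofReal (W x) ^ ((n : ℝ) / ((n : ℝ) - 1))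
      ≤ (∑' x : LV n, ENNReal.ofReal (grad W x)) ^ ((n : ℝ) / ((n : ℝ) - 1)) := by
  have hn1 : (1 : ℝ) < (n : ℝ) := by exact_mod_cast lt_of_lt_of_le one_lt_two hn
  have hn1' : (0 : ℝ) < (n : ℝ) - 1 := by linarith
  have hconj : Real.HolderConjugate (Fintype.card (Fin n) : ℝ) ((n : ℝ) / ((n : ℝ) - 1)) := by
    rw [Fintype.card_fin]
    rw [Real.holderConjugate_iff]
    constructor
    · exact hn1
    · rw [inv_div]
      field_simp
      ring
  set f : LV n → ENNReal := fun x => ENNReal.ofReal (grad W x) with hf_def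
  have hf : Measurable f := measurable_of_countable f
  have H := MeasureTheory.lintegral_prod_lintegral_pow_le
    (A := fun _ : Fin n => ℤ) (fun _ : Fin n => Measure.count) hconj hf
  rw [pi_count_eq, lintegral_count, lintegral_count] at H
  simp only [Fintype.card_fin] at H
  refine le_trans ?_ H
  refine Summable.tsum_le_tsum (fun x => ?_) ENNReal.summable ENNReal.summable
  have claimA : ∀ i : Fin n, ENNReal.ofReal (W x)
      ≤ ∫⁻ t : ℤ, f (Function.update x i t) ∂Measure.count := by
    intro i
    rw [lintegral_count]
    calc ENNReal.ofReal (W x)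
        ≤ ENNReal.ofReal (∑' t : ℤ, grad W (Function.update x i t)) :=
          ENNReal.ofReal_le_ofReal (le_tsum_line hW hW0 x i)
      _ = ∑' t : ℤ, ENNReal.ofReal (grad W (Function.update x i t)) := by
          refine ENNReal.ofReal_tsum_of_nonneg (fun t => grad_nonneg _ _) ?_
          exact (summable_grad hW hW0).comp_injective
            (fun s t h => by simpa using congrFun h i)
  calc ENNReal.ofReal (W x) ^ ((n : ℝ) / ((n : ℝ) - 1))
      = ∏ _i : Fin n, ENNReal.ofReal (W x) ^ ((1 : ℝ) / ((n : ℝ) - 1)) := by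
        rw [Finset.prod_const, Finset.card_univ, Fintype.card_fin,
          ← ENNReal.rpow_natCast (ENNReal.ofReal (W x) ^ ((1 : ℝ) / ((n : ℝ) - 1))) n,
          ← ENNReal.rpow_mul]
        congr 1
        field_simp
    _ ≤ ∏ i : Fin n, (∫⁻ t : ℤ, f (Function.update x i t) ∂Measure.count)
          ^ ((1 : ℝ) / ((n : ℝ) - 1)) := by
        refine Finset.prod_le_prod' fun i _ => ?_
        exact ENNReal.rpow_le_rpow (claimA i) (by positivity)

end GNSaux

namespace GNSaux

open MeasureTheory

lemma pow_sub_pow_le_ordered {a b : ℝ} (hb : 0 ≤ b) (hba : b ≤ a) (m : ℕ) :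
    a ^ m - b ^ m ≤ (m : ℝ) * ((a ^ (m - 1) + b ^ (m - 1)) * (a - b)) := by
  have ha : 0 ≤ a := le_trans hb hba
  have hgeom := geom_sum₂_mul a b m
  rw [← hgeom]
  have hsum : ∑ i ∈ Finset.range m, a ^ i * b ^ (m - 1 - i) ≤ (m : ℝ) * a ^ (m - 1) := by
    calc ∑ i ∈ Finset.range m, a ^ i * b ^ (m - 1 - i)
        ≤ ∑ _i ∈ Finset.range m, a ^ (m - 1) := by
          refine Finset.sum_le_sum fun i hi => ?_
          have hi' : i < m := Finset.mem_range.1 hi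
          calc a ^ i * b ^ (m - 1 - i) ≤ a ^ i * a ^ (m - 1 - i) :=
                mul_le_mul_of_nonneg_left (pow_le_pow_left₀ hb hba _) (pow_nonneg ha _)
            _ = a ^ (m - 1) := by rw [← pow_add]; congr 1; omega
      _ = (m : ℝ) * a ^ (m - 1) := by
          rw [Finset.sum_const, Finset.card_range, nsmul_eq_mul]
  have hab0 : (0:ℝ) ≤ a - b := by linarith
  calc (∑ i ∈ Finset.range m, a ^ i * b ^ (m - 1 - i)) * (a - b)
      ≤ ((m : ℝ) * a ^ (m - 1)) * (a - b) := mul_le_mul_of_nonneg_right hsum hab0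
    _ ≤ (m : ℝ) * ((a ^ (m - 1) + b ^ (m - 1)) * (a - b)) := by
        nlinarith [mul_nonneg (mul_nonneg (Nat.cast_nonneg (α := ℝ) m)
          (pow_nonneg hb (m-1))) hab0]

lemma abs_pow_sub_pow_le {a b : ℝ} (ha : 0 ≤ a) (hb : 0 ≤ b) (m : ℕ) :
    |a ^ m - b ^ m| ≤ (m : ℝ) * ((a ^ (m - 1) + b ^ (m - 1)) * |a - b|) := by
  rcases le_total b a with hba | hab
  · have h1 : b ^ m ≤ a ^ m := pow_le_pow_left₀ hb hba m
    rw [abs_of_nonneg (by linarith : (0:ℝ) ≤ a ^ m - b ^ m),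
      abs_of_nonneg (by linarith : (0:ℝ) ≤ a - b)]
    exact pow_sub_pow_le_ordered hb hba m
  · have h1 : a ^ m ≤ b ^ m := pow_le_pow_left₀ ha hab m
    rw [abs_sub_comm, abs_sub_comm a b,
      abs_of_nonneg (by linarith : (0:ℝ) ≤ b ^ m - a ^ m),
      abs_of_nonneg (by linarith : (0:ℝ) ≤ b - a)]
    calc b ^ m - a ^ m ≤ (m : ℝ) * ((b ^ (m-1) + a ^ (m-1)) * (b - a)) :=
          pow_sub_pow_le_ordered ha hab m
      _ = (m : ℝ) * ((a ^ (m-1) + b ^ (m-1)) * (b - a)) := by ring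

lemma ennreal_CS {β : Type*} [Countable β] [MeasurableSpace β] [MeasurableSingletonClass β]
    (A B : β → ENNReal) :
    ∑' z, A z * B z
      ≤ (∑' z, A z ^ (2:ℝ)) ^ ((1:ℝ)/2) * (∑' z, B z ^ (2:ℝ)) ^ ((1:ℝ)/2) := by
  have hconj : Real.HolderConjugate 2 2 := Real.HolderConjugate.two_two
  have h := ENNReal.lintegral_mul_le_Lp_mul_Lq Measure.count hconj
    (measurable_of_countable A).aemeasurable (measurable_of_countable B).aemeasurable
  simp only [Pi.mul_apply, lintegral_count] at h
  exact h

end GNSaux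

namespace GNSaux

open MeasureTheory

lemma grad_bound {n : ℕ} (p : ℕ) {u : LV n → ℝ} (hu : Summable (fun x => u x ^ 2)) :
    ∑' x : LV n, ENNReal.ofReal (grad (fun z => |u z| ^ (2*p+2)) x)
      ≤ ENNReal.ofReal ((2*p+2 : ℕ) : ℝ)
        * (((8*n : ℕ) : ENNReal) * ∑' x : LV n, ENNReal.ofReal (|u x| ^ (4*p+2))) ^ ((1:ℝ)/2)
        * (∑' x : LV n, ENNReal.ofReal (∑ y ∈ latNbrs x, (u y - u x) ^ 2)) ^ ((1:ℝ)/2) := by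
  classical
  set W : LV n → ℝ := fun z => |u z| ^ (2*p+2) with hW
  set Q := (Fin n × Bool)
  set A : LV n × Q → ENNReal := fun z =>
    ENNReal.ofReal (|u (z.1 + sh z.2)| ^ (2*p+1) + |u z.1| ^ (2*p+1)) with hA
  set B : LV n × Q → ENNReal := fun z =>
    ENNReal.ofReal (|u (z.1 + sh z.2) - u z.1|) with hB
  set eS := ∑' x : LV n, ENNReal.ofReal (|u x| ^ (4*p+2)) with heS
  -- Step 1+2+3 : bound the lhs by ofReal(2p+2) * ∑' A*B
  have step1 : ∑' x : LV n, ENNReal.ofReal (grad W x)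
      ≤ ENNReal.ofReal ((2*p+2 : ℕ) : ℝ) * ∑' z : LV n × Q, A z * B z := by
    have hpt : ∀ x : LV n, ENNReal.ofReal (grad W x)
        ≤ ∑ q : Q, ENNReal.ofReal ((2*p+2 : ℕ) : ℝ) * (A (x, q) * B (x, q)) := by
      intro x
      rw [grad, sum_latNbrs, ENNReal.ofReal_sum_of_nonneg (fun q _ => abs_nonneg _)]
      refine Finset.sum_le_sum fun q _ => ?_
      have hre : |W (x + sh q) - W x|
          ≤ ((2*p+2 : ℕ) : ℝ) * ((|u (x + sh q)| ^ (2*p+1) + |u x| ^ (2*p+1))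
            * |u (x + sh q) - u x|) := by
        have h1 := abs_pow_sub_pow_le (abs_nonneg (u (x + sh q))) (abs_nonneg (u x)) (2*p+2)
        have hm1 : 2*p+2-1 = 2*p+1 := by omega
        rw [hm1] at h1
        refine le_trans h1 ?_
        have h2 := abs_abs_sub_abs_le_abs_sub (u (x + sh q)) (u x)
        have hnn : (0:ℝ) ≤ |u (x + sh q)| ^ (2*p+1) + |u x| ^ (2*p+1) := by positivity
        have := mul_le_mul_of_nonneg_left h2 hnn
        have := mul_le_mul_of_nonneg_left this (Nat.cast_nonneg (α := ℝ) (2*p+2))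
        linarith
      calc ENNReal.ofReal (|W (x + sh q) - W x|)
          ≤ ENNReal.ofReal (((2*p+2 : ℕ) : ℝ) * ((|u (x + sh q)| ^ (2*p+1) + |u x| ^ (2*p+1))
              * |u (x + sh q) - u x|)) := ENNReal.ofReal_le_ofReal hre
        _ = ENNReal.ofReal ((2*p+2 : ℕ) : ℝ) * (A (x, q) * B (x, q)) := by
            rw [ENNReal.ofReal_mul (Nat.cast_nonneg _), ENNReal.ofReal_mul (by positivity)]
    calc ∑' x : LV n, ENNReal.ofReal (grad W x)
        ≤ ∑' x : LV n, ∑ q : Q, ENNReal.ofReal ((2*p+2 : ℕ) : ℝ) * (A (x, q) * B (x, q)) :=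
          Summable.tsum_le_tsum hpt ENNReal.summable ENNReal.summable
      _ = ∑' x : LV n, ∑' q : Q, ENNReal.ofReal ((2*p+2 : ℕ) : ℝ) * (A (x, q) * B (x, q)) := by
          refine tsum_congr fun x => (tsum_fintype _).symm
      _ = ∑' z : LV n × Q, ENNReal.ofReal ((2*p+2 : ℕ) : ℝ) * (A z * B z) := by
          rw [ENNReal.tsum_prod']
      _ = ENNReal.ofReal ((2*p+2 : ℕ) : ℝ) * ∑' z : LV n × Q, A z * B z := by
          rw [ENNReal.tsum_mul_left]
  -- Step 5 : second moment of A
  have stepA : ∑' z : LV n × Q, A z ^ (2:ℝ) ≤ ((8*n : ℕ) : ENNReal) * eS := by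
    have hpt : ∀ z : LV n × Q, A z ^ (2:ℝ)
        ≤ 2 * ENNReal.ofReal (|u (z.1 + sh z.2)| ^ (4*p+2))
          + 2 * ENNReal.ofReal (|u z.1| ^ (4*p+2)) := by
      intro z
      have h0 : (0:ℝ) ≤ |u (z.1 + sh z.2)| ^ (2*p+1) + |u z.1| ^ (2*p+1) := by positivity
      have hAz : A z = ENNReal.ofReal (|u (z.1 + sh z.2)| ^ (2*p+1) + |u z.1| ^ (2*p+1)) := rfl
      rw [hAz, ENNReal.ofReal_rpow_of_nonneg h0 (by norm_num : (0:ℝ) ≤ 2)]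
      have hsq : (|u (z.1 + sh z.2)| ^ (2*p+1) + |u z.1| ^ (2*p+1)) ^ (2:ℝ)
          = (|u (z.1 + sh z.2)| ^ (2*p+1) + |u z.1| ^ (2*p+1)) ^ (2:ℕ) := by
        rw [show ((2:ℝ)) = ((2:ℕ) : ℝ) by norm_num, Real.rpow_natCast]
      rw [hsq]
      have hineq : (|u (z.1 + sh z.2)| ^ (2*p+1) + |u z.1| ^ (2*p+1)) ^ (2:ℕ)
          ≤ 2 * |u (z.1 + sh z.2)| ^ (4*p+2) + 2 * |u z.1| ^ (4*p+2) := by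
        have e1 : |u (z.1 + sh z.2)| ^ (4*p+2) = (|u (z.1 + sh z.2)| ^ (2*p+1)) ^ (2:ℕ) := by
          rw [← pow_mul]; congr 1; omega
        have e2 : |u z.1| ^ (4*p+2) = (|u z.1| ^ (2*p+1)) ^ (2:ℕ) := by
          rw [← pow_mul]; congr 1; omega
        rw [e1, e2]
        nlinarith [sq_nonneg (|u (z.1 + sh z.2)| ^ (2*p+1) - |u z.1| ^ (2*p+1))]
      calc ENNReal.ofReal ((|u (z.1 + sh z.2)| ^ (2*p+1) + |u z.1| ^ (2*p+1)) ^ (2:ℕ))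
          ≤ ENNReal.ofReal (2 * |u (z.1 + sh z.2)| ^ (4*p+2) + 2 * |u z.1| ^ (4*p+2)) :=
            ENNReal.ofReal_le_ofReal hineq
        _ = 2 * ENNReal.ofReal (|u (z.1 + sh z.2)| ^ (4*p+2))
            + 2 * ENNReal.ofReal (|u z.1| ^ (4*p+2)) := by
            rw [ENNReal.ofReal_add (by positivity) (by positivity),
              ENNReal.ofReal_mul (by norm_num), ENNReal.ofReal_mul (by norm_num)]
            norm_num
    calc ∑' z : LV n × Q, A z ^ (2:ℝ)
        ≤ ∑' z : LV n × Q, (2 * ENNReal.ofReal (|u (z.1 + sh z.2)| ^ (4*p+2))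
            + 2 * ENNReal.ofReal (|u z.1| ^ (4*p+2))) :=
          Summable.tsum_le_tsum hpt ENNReal.summable ENNReal.summable
      _ = ∑' q : Q, ∑' x : LV n, (2 * ENNReal.ofReal (|u (x + sh q)| ^ (4*p+2))
            + 2 * ENNReal.ofReal (|u x| ^ (4*p+2))) := by
          rw [ENNReal.tsum_prod']
          exact ENNReal.tsum_comm
      _ = ∑' _q : Q, (2 * eS + 2 * eS) := by
          refine tsum_congr fun q => ?_
          rw [ENNReal.tsum_add, ENNReal.tsum_mul_left, ENNReal.tsum_mul_left,
            tsum_shift_ennreal (fun x => ENNReal.ofReal (|u x| ^ (4*p+2))) (sh q)]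
      _ = ((8*n : ℕ) : ENNReal) * eS := by
          rw [tsum_fintype, Finset.sum_const, Finset.card_univ]
          have hc : Fintype.card Q = n * 2 := by
            simp [Q, Fintype.card_prod]
          rw [hc, nsmul_eq_mul]
          push_cast
          ring
  -- Step 6 : second moment of B
  have stepB : ∑' z : LV n × Q, B z ^ (2:ℝ)
      = ∑' x : LV n, ENNReal.ofReal (∑ y ∈ latNbrs x, (u y - u x) ^ 2) := by
    rw [ENNReal.tsum_prod']
    refine tsum_congr fun x => ?_
    rw [ENNReal.ofReal_sum_of_nonneg (fun y _ => sq_nonneg _), sum_latNbrs, tsum_fintype]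
    refine Finset.sum_congr rfl fun q _ => ?_
    have hBz : B (x, q) = ENNReal.ofReal (|u (x + sh q) - u x|) := rfl
    rw [hBz, ENNReal.ofReal_rpow_of_nonneg (abs_nonneg _) (by norm_num : (0:ℝ) ≤ 2)]
    congr 1
    rw [show ((2:ℝ)) = ((2:ℕ) : ℝ) by norm_num, Real.rpow_natCast, sq_abs]
  -- assemble
  calc ∑' x : LV n, ENNReal.ofReal (grad W x)
      ≤ ENNReal.ofReal ((2*p+2 : ℕ) : ℝ) * ∑' z : LV n × Q, A z * B z := step1
    _ ≤ ENNReal.ofReal ((2*p+2 : ℕ) : ℝ)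
        * ((∑' z : LV n × Q, A z ^ (2:ℝ)) ^ ((1:ℝ)/2)
          * (∑' z : LV n × Q, B z ^ (2:ℝ)) ^ ((1:ℝ)/2)) :=
        mul_le_mul_right (ennreal_CS A B) _
    _ ≤ ENNReal.ofReal ((2*p+2 : ℕ) : ℝ)
        * ((((8*n : ℕ) : ENNReal) * eS) ^ ((1:ℝ)/2)
          * (∑' x : LV n, ENNReal.ofReal (∑ y ∈ latNbrs x, (u y - u x) ^ 2)) ^ ((1:ℝ)/2)) := by
        refine mul_le_mul_right ?_ _
        rw [stepB]
        exact mul_le_mul_left (ENNReal.rpow_le_rpow stepA (by norm_num)) _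
    _ = ENNReal.ofReal ((2*p+2 : ℕ) : ℝ)
        * (((8*n : ℕ) : ENNReal) * eS) ^ ((1:ℝ)/2)
        * (∑' x : LV n, ENNReal.ofReal (∑ y ∈ latNbrs x, (u y - u x) ^ 2)) ^ ((1:ℝ)/2) := by
        ring

end GNSaux


open GNSaux

/-- For `n ≥ 2` and integer `p ≥ 0` there is a constant `C(n,p)` such that for all
`u ∈ l²(ℤⁿ)`:
`‖u‖_{l^{4p+4}} ≤ ‖u‖_{l^{2n(p+1)/(n-1)}} ≤ C(n,p) |u|_{1,2}^{1/(2p+2)} ‖u‖_{l^{4p+2}}^{(2p+1)/(2p+2)}`. -/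
theorem GNS_special_case (n : ℕ) (hn : 2 ≤ n) (p : ℕ) :
    ∃ C : ℝ, 0 < C ∧ ∀ u : LV n → ℝ, Summable (fun x => (u x) ^ 2) →
      lnorm u (4 * (p : ℝ) + 4) ≤ lnorm u (2 * n * ((p : ℝ) + 1) / (n - 1)) ∧
      lnorm u (2 * n * ((p : ℝ) + 1) / (n - 1))
        ≤ C * semiNorm1 u 2 ^ ((1 : ℝ) / (2 * (p : ℝ) + 2))
            * lnorm u (4 * (p : ℝ) + 2) ^ ((2 * (p : ℝ) + 1) / (2 * (p : ℝ) + 2)) := by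
  classical
  have hn1 : (1 : ℝ) < (n : ℝ) := by exact_mod_cast lt_of_lt_of_le one_lt_two hn
  have hn1' : (0 : ℝ) < (n : ℝ) - 1 := by linarith
  have hn2 : (2 : ℝ) ≤ (n : ℝ) := by exact_mod_cast hn
  have hp0 : (0 : ℝ) ≤ (p : ℝ) := Nat.cast_nonneg p
  set r : ℝ := 2 * n * ((p : ℝ) + 1) / (n - 1) with hr_def
  have hr2 : (2 : ℝ) ≤ r := by
    rw [hr_def, le_div_iff₀ hn1']
    nlinarith
  have hr44 : r ≤ 4 * (p : ℝ) + 4 := by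
    rw [hr_def, div_le_iff₀ hn1']
    nlinarith
  have hr0 : (0 : ℝ) < r := by linarith
  refine ⟨((2 * (p : ℝ) + 2) * (8 * (n : ℝ)) ^ ((1:ℝ)/2)) ^ ((1:ℝ)/(2 * (p : ℝ) + 2)),
    ?_, fun u hu => ?_⟩
  · apply Real.rpow_pos_of_pos
    have : (0:ℝ) < (8 * (n : ℝ)) ^ ((1:ℝ)/2) := Real.rpow_pos_of_pos (by linarith) _
    nlinarith
  have hsumr : Summable (fun x => |u x| ^ r) := summable_rpow_of_two_le hu hr2
  constructor
  · exact lnorm_mono hr0 hr44 hsumr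
  -- main inequality
  set W : LV n → ℝ := fun z => |u z| ^ (2*p+2) with hW_def
  have hW0 : ∀ x, 0 ≤ W x := fun x => pow_nonneg (abs_nonneg _) _
  have hWsum : Summable W := by
    have h := summable_rpow_of_two_le hu (a := ((2*p+2 : ℕ) : ℝ)) (by push_cast; linarith)
    refine h.congr fun x => ?_
    rw [Real.rpow_natCast]
  have hsum42 : Summable (fun x => |u x| ^ (4 * (p:ℝ) + 2)) :=
    summable_rpow_of_two_le hu (by linarith)
  have hsum42' : Summable (fun x : LV n => |u x| ^ (4*p+2 : ℕ)) := by
    refine hsum42.congr fun x => ?_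
    rw [← Real.rpow_natCast |u x| (4*p+2)]
    congr 1
    push_cast
    ring
  have hsumE : Summable (fun x : LV n => ∑ y ∈ latNbrs x, (u y - u x) ^ 2) := by
    have hbig : Summable (fun x : LV n =>
        ∑ q : Fin n × Bool, (2 * u (x + sh q) ^ 2 + 2 * u x ^ 2)) :=
      summable_sum fun q _ => ((summable_shift hu (sh q)).mul_left 2).add (hu.mul_left 2)
    refine Summable.of_nonneg_of_le
      (fun x => Finset.sum_nonneg fun y _ => sq_nonneg _) (fun x => ?_) hbig
    rw [sum_latNbrs]
    exact Finset.sum_le_sum fun q _ => by nlinarith [sq_nonneg (u (x + sh q) + u x)]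
  set S42 : ℝ := ∑' x : LV n, |u x| ^ (4 * (p:ℝ) + 2) with hS42_def
  set E : ℝ := ∑' x : LV n, ∑ y ∈ latNbrs x, |u y - u x| ^ (2:ℝ) with hE_def
  have hE_eq : E = ∑' x : LV n, ∑ y ∈ latNbrs x, (u y - u x) ^ 2 := by
    rw [hE_def]
    refine tsum_congr fun x => Finset.sum_congr rfl fun y _ => ?_
    rw [show ((2:ℝ)) = ((2:ℕ) : ℝ) by norm_num, Real.rpow_natCast, sq_abs]
  have hS42_0 : 0 ≤ S42 := tsum_nonneg fun x => Real.rpow_nonneg (abs_nonneg _) _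
  have hE0 : 0 ≤ E := by
    rw [hE_eq]
    exact tsum_nonneg fun x => Finset.sum_nonneg fun y _ => sq_nonneg _
  set Sr : ℝ := ∑' x : LV n, |u x| ^ r with hSr_def
  set K : ℝ := (2 * (p:ℝ) + 2) * (8 * (n:ℝ) * S42) ^ ((1:ℝ)/2) * E ^ ((1:ℝ)/2) with hK_def
  have hK0 : 0 ≤ K := by
    rw [hK_def]
    have h1 : (0:ℝ) ≤ (8 * (n:ℝ) * S42) ^ ((1:ℝ)/2) := Real.rpow_nonneg (by positivity) _
    have h2 : (0:ℝ) ≤ E ^ ((1:ℝ)/2) := Real.rpow_nonneg hE0 _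
    positivity
  -- the key ENNReal estimate
  have key : Sr ≤ K ^ ((n:ℝ)/((n:ℝ)-1)) := by
    rw [← ENNReal.ofReal_le_ofReal_iff (Real.rpow_nonneg hK0 _)]
    have e1 : ENNReal.ofReal Sr = ∑' x : LV n, ENNReal.ofReal (W x) ^ ((n:ℝ)/((n:ℝ)-1)) := by
      rw [hSr_def, ENNReal.ofReal_tsum_of_nonneg
        (fun x => Real.rpow_nonneg (abs_nonneg _) _) hsumr]
      refine tsum_congr fun x => ?_
      rw [ENNReal.ofReal_rpow_of_nonneg (hW0 x) (by positivity)]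
      congr 1
      show |u x| ^ r = (|u x| ^ (2*p+2) : ℝ) ^ ((n:ℝ)/((n:ℝ)-1))
      rw [← Real.rpow_natCast |u x| (2*p+2), ← Real.rpow_mul (abs_nonneg _)]
      congr 1
      rw [hr_def]
      push_cast
      rw [← mul_div_assoc]
      congr 1
      ring
    have e2 : (∑' x : LV n, ENNReal.ofReal (grad W x)) ≤ ENNReal.ofReal
        ((2 * (p:ℝ) + 2) * (8 * (n:ℝ) * S42) ^ ((1:ℝ)/2) * E ^ ((1:ℝ)/2)) := by
      have hgb := grad_bound (n := n) p hu
      have heS : (∑' x : LV n, ENNReal.ofReal (|u x| ^ (4*p+2 : ℕ)))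
          = ENNReal.ofReal S42 := by
        rw [hS42_def, ENNReal.ofReal_tsum_of_nonneg
          (fun x => Real.rpow_nonneg (abs_nonneg _) _) hsum42]
        refine tsum_congr fun x => ?_
        congr 1
        rw [← Real.rpow_natCast |u x| (4*p+2)]
        congr 1
        push_cast
        ring
      have heE : (∑' x : LV n, ENNReal.ofReal (∑ y ∈ latNbrs x, (u y - u x) ^ 2))
          = ENNReal.ofReal E := by
        rw [hE_eq, ENNReal.ofReal_tsum_of_nonneg
          (fun x => Finset.sum_nonneg fun y _ => sq_nonneg _) hsumE]
      rw [heS, heE] at hgb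
      refine le_trans hgb (le_of_eq ?_)
      rw [← ENNReal.ofReal_natCast (8*n), ← ENNReal.ofReal_mul (by positivity),
        ENNReal.ofReal_rpow_of_nonneg (by positivity) (by norm_num),
        ENNReal.ofReal_rpow_of_nonneg hE0 (by norm_num),
        ← ENNReal.ofReal_mul (by positivity),
        ← ENNReal.ofReal_mul (by positivity)]
      congr 2
      push_cast
      ring
    calc ENNReal.ofReal Sr
        = ∑' x : LV n, ENNReal.ofReal (W x) ^ ((n:ℝ)/((n:ℝ)-1)) := e1
      _ ≤ (∑' x : LV n, ENNReal.ofReal (grad W x)) ^ ((n:ℝ)/((n:ℝ)-1)) :=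
          sobolev_one hn hWsum hW0
      _ ≤ (ENNReal.ofReal K) ^ ((n:ℝ)/((n:ℝ)-1)) :=
          ENNReal.rpow_le_rpow e2 (by positivity)
      _ = ENNReal.ofReal (K ^ ((n:ℝ)/((n:ℝ)-1))) :=
          ENNReal.ofReal_rpow_of_nonneg hK0 (by positivity)
  -- real endgame
  have hSr0 : 0 ≤ Sr := tsum_nonneg fun x => Real.rpow_nonneg (abs_nonneg _) _
  have hexp : ((n:ℝ)/((n:ℝ)-1)) * (1/r) = 1/(2*(p:ℝ)+2) := by
    rw [hr_def, one_div_div, div_mul_div_comm,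
      div_eq_div_iff (by positivity) (by positivity)]
    ring
  have hlnr : lnorm u r ≤ K ^ ((1:ℝ)/(2*(p:ℝ)+2)) := by
    rw [lnorm, ← hSr_def]
    calc Sr ^ (1/r) ≤ (K ^ ((n:ℝ)/((n:ℝ)-1))) ^ (1/r) :=
          Real.rpow_le_rpow hSr0 key (by positivity)
      _ = K ^ ((1:ℝ)/(2*(p:ℝ)+2)) := by
          rw [← Real.rpow_mul hK0, hexp]
  refine le_trans hlnr (le_of_eq ?_)
  have base_eq : K = ((2 * (p:ℝ) + 2) * (8 * (n:ℝ)) ^ ((1:ℝ)/2))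
      * (S42 ^ ((1:ℝ)/2) * E ^ ((1:ℝ)/2)) := by
    rw [hK_def, Real.mul_rpow (by positivity) hS42_0]
    ring
  have hsplit : K ^ ((1:ℝ)/(2*(p:ℝ)+2))
      = ((2 * (p:ℝ) + 2) * (8 * (n:ℝ)) ^ ((1:ℝ)/2)) ^ ((1:ℝ)/(2*(p:ℝ)+2))
        * (S42 ^ ((1:ℝ)/2)) ^ ((1:ℝ)/(2*(p:ℝ)+2))
        * (E ^ ((1:ℝ)/2)) ^ ((1:ℝ)/(2*(p:ℝ)+2)) := by
    rw [base_eq, Real.mul_rpow (by positivity)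
        (mul_nonneg (Real.rpow_nonneg hS42_0 _) (Real.rpow_nonneg hE0 _)),
      Real.mul_rpow (Real.rpow_nonneg hS42_0 _) (Real.rpow_nonneg hE0 _)]
    ring
  rw [hsplit]
  have h1 : (E ^ ((1:ℝ)/2)) ^ ((1:ℝ)/(2*(p:ℝ)+2))
      = semiNorm1 u 2 ^ ((1 : ℝ) / (2 * (p : ℝ) + 2)) := by
    rw [semiNorm1, ← hE_def]
  have h2 : (S42 ^ ((1:ℝ)/2)) ^ ((1:ℝ)/(2*(p:ℝ)+2))
      = lnorm u (4 * (p : ℝ) + 2) ^ ((2 * (p : ℝ) + 1) / (2 * (p : ℝ) + 2)) := by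
    rw [lnorm, ← hS42_def, ← Real.rpow_mul hS42_0, ← Real.rpow_mul hS42_0]
    congr 1
    field_simp
    ring
  rw [h1, h2]
  ring
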